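/- arXiv:2603.26925 — 2 statements merged into one kernel-verified Lean document; each statement's English description precedes it below -/
import Mathlib

section
/- Let f be a semisimple (diagonalizable over the algebraic closure) endomorphism of a finite-dimensional vector space V over a field k, and let W ⊆ V be an f-stable subspace such that the inclusion induces an isomorphism {w ∈ W : f(w) = w} ≅ {v ∈ V : f(v) = v}. Then the induced endomorphism f̄ of V/W has no nonzero fixed vector; equivalently, det(id − f̄) ≠ 0 on V/W. -/
/-- if `f` is a semisimple endomorphism of a finite-dimensional vector space `V`
and `W` is an `f`-stable subspace containing all the `f`-fixed vectors of `V` (so that the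
inclusion induces an isomorphism on fixed subspaces), then the induced endomorphism of `V/W`
has no nonzero fixed vector; equivalently `det (id - f̄) ≠ 0`. -/
theorem stmt3 {k V : Type*} [Field k] [AddCommGroup V] [Module k V] [FiniteDimensional k V]
    (f : Module.End k V) (hf : f.IsSemisimple)
    (W : Submodule k V) (hW : W ≤ W.comap f)
    (hfix : ∀ v : V, f v = v → v ∈ W) :
    (∀ x : V ⧸ W, Submodule.mapQ W W f hW x = x → x = 0) ∧
    LinearMap.det (LinearMap.id - Submodule.mapQ W W f hW) ≠ 0 := by
  have hmem : W ∈ f.invtSubmodule := hW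
  obtain ⟨U, hU, hcompl⟩ := (Module.End.isSemisimple_iff.mp hf) W hmem
  have key : ∀ x : V ⧸ W, Submodule.mapQ W W f hW x = x → x = 0 := by
    intro x hx
    obtain ⟨v, rfl⟩ := Submodule.Quotient.mk_surjective W x
    -- decompose v = w + u
    have hv : v ∈ W ⊔ U := by rw [hcompl.sup_eq_top]; trivial
    obtain ⟨w, hw, u, hu', rfl⟩ := Submodule.mem_sup.mp hv
    have hWu : (Submodule.Quotient.mk (w + u) : V ⧸ W) = Submodule.Quotient.mk u := by
      rw [Submodule.Quotient.eq]; simpa using hw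
    rw [hWu] at hx ⊢
    rw [Submodule.mapQ_apply, Submodule.Quotient.eq] at hx
    -- f u - u ∈ W, also f u ∈ U
    have hfu : f u ∈ U := hU hu'
    have hdiff : f u - u ∈ U := U.sub_mem hfu hu'
    have : f u - u = 0 := by
      have := hcompl.disjoint.le_bot ⟨hx, hdiff⟩
      simpa using this
    have hfueq : f u = u := sub_eq_zero.mp this
    have := hfix u hfueq
    rw [Submodule.Quotient.mk_eq_zero]
    exact this
  refine ⟨key, fun hdet => ?_⟩
  obtain ⟨m, hm, hm0⟩ := SetLike.exists_of_lt (LinearMap.bot_lt_ker_of_det_eq_zero hdet)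
  have hm' : m - Submodule.mapQ W W f hW m = 0 := by
    simpa [LinearMap.mem_ker, sub_eq_zero] using hm
  exact hm0 (key m (sub_eq_zero.mp hm').symm)
end

section
/- Let α be an endomorphism of a finite-dimensional vector space V over a field k of characteristic zero. Then in the polynomial ring k[t] one has the identity det(id_V − t·α) = Σ_{n=0}^{dim V} (−1)^n · tr(Λ^n α) · t^n, where Λ^n α denotes the induced endomorphism of the n-th exterior power of V. In particular det(id_V − α) = Σ_{n} (−1)^n tr(Λ^n α). -/
open Polynomial ExteriorAlgebra

section
variable {k V : Type*} [Field k] [AddCommGroup V] [Module k V]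

lemma exteriorAlgebraMap_mem_exteriorPower (α : V →ₗ[k] V) (n : ℕ) :
    ∀ x ∈ ⋀[k]^n V, ExteriorAlgebra.map α x ∈ ⋀[k]^n V := by
  intro x hx
  rw [← ιMulti_span_fixedDegree] at hx ⊢
  induction hx using Submodule.span_induction with
  | mem x h =>
    obtain ⟨v, rfl⟩ := h
    rw [map_apply_ιMulti]
    exact Submodule.subset_span ⟨_, rfl⟩
  | zero => simp
  | add x y _ _ hx' hy' => rw [map_add]; exact Submodule.add_mem _ hx' hy'
  | smul c x _ hx' => rw [map_smul]; exact Submodule.smul_mem _ _ hx'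

/-- The endomorphism `Λ^n α` of the `n`-th exterior power induced by `α`. -/
noncomputable def exteriorPowerMap (n : ℕ) (α : V →ₗ[k] V) :
    ⋀[k]^n V →ₗ[k] ⋀[k]^n V :=
  (ExteriorAlgebra.map α).toLinearMap.restrict (exteriorAlgebraMap_mem_exteriorPower α n)

end

namespace Stmt6Aux

noncomputable def inc {d n : ℕ} (s : {s : Finset (Fin d) // s.card = n}) : Fin n → Fin d :=
  fun i => (s.1.orderIsoOfFin s.2 i : Fin d)

lemma inc_injective {d n : ℕ} (s : {s : Finset (Fin d) // s.card = n}) :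
    Function.Injective (inc s) := fun i j h =>
  (s.1.orderIsoOfFin s.2).injective (Subtype.ext h)

lemma inc_mem {d n : ℕ} (s : {s : Finset (Fin d) // s.card = n}) (i : Fin n) :
    inc s i ∈ s.1 := (s.1.orderIsoOfFin s.2 i).2

variable {k V : Type*} [Field k] [AddCommGroup V] [Module k V]
variable {d : ℕ}

/-- Wedge of basis vectors indexed by a subset. -/
noncomputable def bE (b : Module.Basis (Fin d) k V) (n : ℕ)
    (s : {s : Finset (Fin d) // s.card = n}) : ExteriorAlgebra k V :=
  ιMulti k n (fun i => b (inc s i))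

lemma bE_mem (b : Module.Basis (Fin d) k V) (n : ℕ) (s : {s : Finset (Fin d) // s.card = n}) :
    bE b n s ∈ ⋀[k]^n V :=
  ιMulti_range k n ⟨_, rfl⟩

/-- Dual alternating map given by coordinates on a subset. -/
noncomputable def coordAlt (b : Module.Basis (Fin d) k V) (n : ℕ)
    (s : {s : Finset (Fin d) // s.card = n}) : V [⋀^Fin n]→ₗ[k] k :=
  (Matrix.detRowAlternating : (Fin n → k) [⋀^Fin n]→ₗ[k] k).compLinearMap
    (LinearMap.pi fun i => b.coord (inc s i))

lemma coordAlt_apply (b : Module.Basis (Fin d) k V) (n : ℕ)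
    (s : {s : Finset (Fin d) // s.card = n}) (v : Fin n → V) :
    coordAlt b n s v = (Matrix.of fun j i => b.repr (v j) (inc s i)).det := rfl

/-- Dual functional on the exterior algebra. -/
noncomputable def ell (b : Module.Basis (Fin d) k V) (n : ℕ)
    (s : {s : Finset (Fin d) // s.card = n}) : ExteriorAlgebra k V →ₗ[k] k :=
  liftAlternating (Pi.single n (coordAlt b n s))

lemma ell_ιMulti (b : Module.Basis (Fin d) k V) (n : ℕ)
    (s : {s : Finset (Fin d) // s.card = n}) (v : Fin n → V) :
    ell b n s (ιMulti k n v) = coordAlt b n s v := by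
  rw [ell, liftAlternating_apply_ιMulti, Pi.single_eq_same]

lemma ell_bE (b : Module.Basis (Fin d) k V) (n : ℕ)
    (s t : {s : Finset (Fin d) // s.card = n}) :
    ell b n s (bE b n t) = if s = t then 1 else 0 := by
  classical
  rw [bE, ell_ιMulti, coordAlt_apply]
  by_cases h : s = t
  · subst h
    simp only [if_pos rfl]
    have : (Matrix.of fun j i => (b.repr (b (inc s j))) (inc s i)) = (1 : Matrix (Fin n) (Fin n) k) := by
      ext j i
      rw [Matrix.of_apply, b.repr_self, Finsupp.single_apply, Matrix.one_apply]
      by_cases hji : j = i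
      · simp [hji]
      · have : inc s j ≠ inc s i := fun hc => hji (inc_injective s hc)
        simp [hji, this]
    rw [this, Matrix.det_one, if_pos trivial]
  · rw [if_neg h]
    -- find an element of t not in s
    have hts : ¬ (t.1 ⊆ s.1) := by
      intro hsub
      exact h (Subtype.ext (Finset.eq_of_subset_of_card_le hsub (by rw [s.2, t.2])).symm)
    obtain ⟨x, hxt, hxs⟩ := Finset.not_subset.mp hts
    obtain ⟨j, hj⟩ : ∃ j, inc t j = x := by
      have : x ∈ t.1 := hxt
      obtain ⟨y, hy⟩ := (t.1.orderIsoOfFin t.2).surjective ⟨x, this⟩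
      exact ⟨y, by simp [inc, hy]⟩
    apply Matrix.det_eq_zero_of_row_eq_zero j
    intro i
    rw [Matrix.of_apply, b.repr_self, Finsupp.single_apply]
    have : inc t j ≠ inc s i := by
      rw [hj]; exact fun hc => hxs (hc ▸ inc_mem s i)
    simp [this]


lemma ιMulti_mem_span (b : Module.Basis (Fin d) k V) (n : ℕ) (v : Fin n → V) :
    ιMulti k n v ∈ Submodule.span k (Set.range (bE b n)) := by
  classical
  have hv : v = fun i => ∑ j, b.repr (v i) j • b j := by
    funext i
    exact (b.sum_repr (v i)).symm
  have hms : ((ιMulti k n (M := V)) : _) v = (ιMulti k n (M := V)).toMultilinearMap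
      (fun i => ∑ j, b.repr (v i) j • b j) := by rw [← hv]; rfl
  rw [hms, MultilinearMap.map_sum]
  apply Submodule.sum_mem
  intro r _
  have : (ιMulti k n (M := V)).toMultilinearMap (fun i => b.repr (v i) (r i) • b (r i))
      = (∏ i, b.repr (v i) (r i)) • (ιMulti k n (M := V)).toMultilinearMap (fun i => b (r i)) :=
    MultilinearMap.map_smul_univ _ _ _
  rw [this]
  apply Submodule.smul_mem
  by_cases hr : Function.Injective r
  · -- the image is a subset of cardinality n
    have hs : (Finset.univ.image r).card = n := by
      rw [Finset.card_image_of_injective _ hr, Finset.card_univ, Fintype.card_fin]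
    set s : {s : Finset (Fin d) // s.card = n} := ⟨Finset.univ.image r, hs⟩ with hsdef
    have hmem : ∀ i, r i ∈ s.1 := fun i => Finset.mem_image_of_mem r (Finset.mem_univ i)
    set σ : Fin n → Fin n := fun i => (s.1.orderIsoOfFin s.2).symm (⟨r i, hmem i⟩ : {x // x ∈ s.1}) with hσ
    have hσinj : Function.Injective σ := by
      intro i j hij
      apply hr
      have := (s.1.orderIsoOfFin s.2).symm.injective.eq_iff.mp hij
      exact Subtype.ext_iff.mp this
    let e : Equiv.Perm (Fin n) := Equiv.ofBijective σ (Finite.injective_iff_bijective.mp hσinj)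
    have hcomp : (fun i => b (r i)) = (fun i => b (inc s i)) ∘ e := by
      funext i
      simp only [Function.comp_apply]
      congr 1
      show r i = inc s (σ i)
      rw [hσ, inc]
      simp
    have : (ιMulti k n (M := V)).toMultilinearMap (fun i => b (r i))
        = Equiv.Perm.sign e • bE b n s := by
      rw [hcomp]
      exact (ιMulti k n (M := V)).map_perm _ e
    rw [this]
    have hmem' : bE b n s ∈ Submodule.span k (Set.range (bE b n)) :=
      Submodule.subset_span (Set.mem_range_self s)
    rcases Int.units_eq_one_or (Equiv.Perm.sign e) with h | h <;> rw [h]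
    · simpa using hmem'
    · simpa using Submodule.neg_mem _ hmem'
  · -- not injective: the wedge vanishes
    rw [Function.not_injective_iff] at hr
    obtain ⟨i, j, hij, hne⟩ := hr
    have : (ιMulti k n (M := V)) (fun i => b (r i)) = 0 :=
      AlternatingMap.map_eq_zero_of_eq _ _ (by rw [hij]) hne
    rw [show (ιMulti k n (M := V)).toMultilinearMap (fun i => b (r i))
      = (ιMulti k n (M := V)) (fun i => b (r i)) from rfl, this]
    exact Submodule.zero_mem _

lemma span_bE (b : Module.Basis (Fin d) k V) (n : ℕ) :
    Submodule.span k (Set.range (bE b n)) = ⋀[k]^n V := by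
  refine le_antisymm (Submodule.span_le.2 ?_) ?_
  · rintro x ⟨s, rfl⟩
    exact bE_mem b n s
  · rw [← ιMulti_span_fixedDegree]
    rw [Submodule.span_le]
    rintro x ⟨v, rfl⟩
    exact ιMulti_mem_span b n v

/-- Elements of the exterior power. -/
noncomputable def bEP (b : Module.Basis (Fin d) k V) (n : ℕ)
    (s : {s : Finset (Fin d) // s.card = n}) : ⋀[k]^n V :=
  ⟨bE b n s, bE_mem b n s⟩

lemma bEP_li (b : Module.Basis (Fin d) k V) (n : ℕ) : LinearIndependent k (bEP b n) := by
  classical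
  rw [Fintype.linearIndependent_iff]
  intro g hg t
  have hg' : ∑ s, g s • bE b n s = 0 := by
    have := congrArg (Submodule.subtype _) hg
    simpa [bEP] using this
  have := congrArg (ell b n t) hg'
  simp only [map_sum, map_smul, ell_bE, map_zero, smul_eq_mul, mul_ite, mul_one, mul_zero,
    eq_comm (a := t), Finset.sum_ite_eq] at this
  simpa using this

lemma bEP_span (b : Module.Basis (Fin d) k V) (n : ℕ) :
    ⊤ ≤ Submodule.span k (Set.range (bEP b n)) := by
  have hinj := Submodule.injective_subtype (⋀[k]^n V)
  have hmap : Submodule.map (⋀[k]^n V).subtype (Submodule.span k (Set.range (bEP b n)))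
      = Submodule.map (⋀[k]^n V).subtype ⊤ := by
    rw [Submodule.map_span, Submodule.map_top, Submodule.range_subtype]
    rw [← Set.range_comp]
    have : (⋀[k]^n V).subtype ∘ bEP b n = bE b n := rfl
    rw [this, span_bE]
  exact le_of_eq ((Submodule.map_injective_of_injective hinj hmap)).symm

/-- Module.Basis of the `n`-th exterior power. -/
noncomputable def basisEP (b : Module.Basis (Fin d) k V) (n : ℕ) :
    Module.Basis {s : Finset (Fin d) // s.card = n} k (⋀[k]^n V) :=
  Module.Basis.mk (bEP_li b n) (bEP_span b n)

lemma repr_eq_ell (b : Module.Basis (Fin d) k V) (n : ℕ)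
    (t : {s : Finset (Fin d) // s.card = n}) (x : ⋀[k]^n V) :
    (basisEP b n).repr x t = ell b n t (x : ExteriorAlgebra k V) := by
  have : ((basisEP b n).coord t : ⋀[k]^n V →ₗ[k] k)
      = (ell b n t) ∘ₗ (⋀[k]^n V).subtype := by
    apply (basisEP b n).ext
    intro s
    simp only [Module.Basis.coord_apply, Module.Basis.repr_self, LinearMap.comp_apply]
    rw [basisEP, Module.Basis.mk_apply]
    show _ = ell b n t (bE b n s)
    rw [ell_bE, Finsupp.single_apply]
    simp [eq_comm]
  exact congrArg (fun f : ⋀[k]^n V →ₗ[k] k => f x) this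


lemma trace_exteriorPowerMap (b : Module.Basis (Fin d) k V) (n : ℕ) (α : V →ₗ[k] V) :
    LinearMap.trace k (⋀[k]^n V) (exteriorPowerMap n α) =
      ∑ s : {s : Finset (Fin d) // s.card = n},
        ((LinearMap.toMatrix b b α).submatrix (inc s) (inc s)).det := by
  classical
  rw [LinearMap.trace_eq_matrix_trace k (basisEP b n), Matrix.trace]
  refine Finset.sum_congr rfl fun s _ => ?_
  rw [Matrix.diag_apply, LinearMap.toMatrix_apply, repr_eq_ell]
  have h1 : ((exteriorPowerMap n α) (basisEP b n s) : ExteriorAlgebra k V)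
      = ιMulti k n (fun i => α (b (inc s i))) := by
    rw [basisEP, Module.Basis.mk_apply]
    show ExteriorAlgebra.map α (bE b n s) = _
    rw [bE, map_apply_ιMulti]
    rfl
  rw [h1, ell_ιMulti, coordAlt_apply, ← Matrix.det_transpose]
  congr 1
  ext i j
  simp [Matrix.transpose_apply, LinearMap.toMatrix_apply]

section MatrixPart
variable {R : Type*} [CommRing R] {d : ℕ}

lemma det_piecewise (B : Matrix (Fin d) (Fin d) R) (S : Finset (Fin d)) :
    (Matrix.of (S.piecewise (fun i => B i) (fun i => (1 : Matrix (Fin d) (Fin d) R) i))).det =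
      (B.submatrix (fun i : {x // x ∈ S} => (i : Fin d)) (fun j : {x // x ∈ S} => (j : Fin d))).det := by
  classical
  rw [← Matrix.det_submatrix_equiv_self (Equiv.sumCompl (· ∈ S))]
  have : (Matrix.of (S.piecewise (fun i => B i) (fun i => (1 : Matrix (Fin d) (Fin d) R) i))).submatrix
      (Equiv.sumCompl (· ∈ S)) (Equiv.sumCompl (· ∈ S)) =
      Matrix.fromBlocks
        (B.submatrix (fun i : {x // x ∈ S} => (i : Fin d)) (fun j : {x // x ∈ S} => (j : Fin d)))
        (B.submatrix (fun i : {x // x ∈ S} => (i : Fin d)) (fun j : {x // ¬ x ∈ S} => (j : Fin d)))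
        0 1 := by
    ext i j
    cases i with
    | inl i =>
      cases j with
      | inl j => simp [Finset.piecewise, i.2]
      | inr j => simp [Finset.piecewise, i.2]
    | inr i =>
      cases j with
      | inl j =>
        have h : (i : Fin d) ≠ (j : Fin d) := fun h => i.2 (h ▸ j.2)
        simp [Finset.piecewise, i.2, Matrix.one_apply, h]
      | inr j =>
        by_cases h : i = j
        · subst h; simp [Finset.piecewise, i.2, Matrix.one_apply]
        · have h' : (i : Fin d) ≠ (j : Fin d) := fun hv => h (Subtype.ext hv)
          simp [Finset.piecewise, i.2, Matrix.one_apply, h, h']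
  rw [this, Matrix.det_fromBlocks_zero₂₁]
  simp

lemma det_one_add (B : Matrix (Fin d) (Fin d) R) :
    (1 + B).det = ∑ S : Finset (Fin d),
      (B.submatrix (fun i : {x // x ∈ S} => (i : Fin d)) (fun j : {x // x ∈ S} => (j : Fin d))).det := by
  classical
  have h1 : (1 + B : Matrix (Fin d) (Fin d) R) =
      Matrix.of ((fun i => B i) + (fun i => (1 : Matrix (Fin d) (Fin d) R) i)) := by
    ext i j
    simp [Matrix.add_apply]
    exact add_comm _ _
  have hdet : (1 + B).det =
      (Matrix.detRowAlternating : (Fin d → R) [⋀^Fin d]→ₗ[R] R).toMultilinearMap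
        ((fun i => B i) + (fun i => (1 : Matrix (Fin d) (Fin d) R) i)) := by
    rw [h1]; rfl
  rw [hdet, MultilinearMap.map_add_univ]
  refine Finset.sum_congr rfl fun S _ => ?_
  exact det_piecewise B S

lemma det_subtype_eq {n : ℕ} (A : Matrix (Fin d) (Fin d) R) (s : {s : Finset (Fin d) // s.card = n}) :
    (A.submatrix (fun i : {x // x ∈ s.1} => (i : Fin d)) (fun j : {x // x ∈ s.1} => (j : Fin d))).det
      = (A.submatrix (inc s) (inc s)).det := by
  rw [← Matrix.det_submatrix_equiv_self (s.1.orderIsoOfFin s.2).toEquiv]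
  rfl

theorem det_one_sub_smul (A : Matrix (Fin d) (Fin d) R) (c : R) :
    (1 - c • A).det = ∑ n ∈ Finset.range (d + 1), (-1 : R) ^ n * c ^ n *
      ∑ s : {s : Finset (Fin d) // s.card = n}, (A.submatrix (inc s) (inc s)).det := by
  classical
  have h1 : (1 - c • A : Matrix (Fin d) (Fin d) R) = 1 + (-c) • A := by
    rw [neg_smul, ← sub_eq_add_neg]
  rw [h1, det_one_add ((-c) • A)]
  have key : ∀ S : Finset (Fin d),
      (((-c) • A).submatrix (fun i : {x // x ∈ S} => (i : Fin d)) (fun j : {x // x ∈ S} => (j : Fin d))).det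
        = (-c) ^ S.card *
          (A.submatrix (fun i : {x // x ∈ S} => (i : Fin d)) (fun j : {x // x ∈ S} => (j : Fin d))).det := by
    intro S
    rw [show (((-c) • A).submatrix (fun i : {x // x ∈ S} => (i : Fin d))
        (fun j : {x // x ∈ S} => (j : Fin d))) = (-c) •
        (A.submatrix (fun i : {x // x ∈ S} => (i : Fin d)) (fun j : {x // x ∈ S} => (j : Fin d))) from rfl,
      Matrix.det_smul, Fintype.card_coe]
  simp_rw [key]
  rw [← Finset.sum_fiberwise_of_maps_to (g := Finset.card)
    (fun S _ => Finset.mem_range.2 (Nat.lt_succ_of_le (by simpa using Finset.card_le_univ S)))]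
  refine Finset.sum_congr rfl fun n _ => ?_
  rw [Finset.sum_subtype (Finset.univ.filter (fun S : Finset (Fin d) => S.card = n))
      (p := fun S : Finset (Fin d) => S.card = n) (by simp)
      (f := fun S => (-c) ^ S.card *
        (A.submatrix (fun i : {x // x ∈ S} => (i : Fin d)) (fun j : {x // x ∈ S} => (j : Fin d))).det),
    Finset.mul_sum]
  refine Finset.sum_congr rfl fun s _ => ?_
  rw [det_subtype_eq, s.2, neg_pow]

end MatrixPart

end Stmt6Aux

set_option synthInstance.maxHeartbeats 1000000 in
set_option maxHeartbeats 2000000 in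
open Stmt6Aux in
/-- `det (id - t•α) = ∑ (-1)^n tr(Λ^n α) t^n` in `k[t]`, and in particular
`det (id - α) = ∑ (-1)^n tr(Λ^n α)`. -/
theorem stmt6 {k V : Type*} [Field k] [CharZero k] [AddCommGroup V] [Module k V]
    [FiniteDimensional k V] (α : V →ₗ[k] V) :
    (LinearMap.det (LinearMap.id - (Polynomial.X : k[X]) • LinearMap.baseChange k[X] α) =
      ∑ n ∈ Finset.range (Module.finrank k V + 1),
        (-1 : k[X]) ^ n * Polynomial.C (LinearMap.trace k (⋀[k]^n V) (exteriorPowerMap n α)) *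
          Polynomial.X ^ n) ∧
    (LinearMap.det (LinearMap.id - α) =
      ∑ n ∈ Finset.range (Module.finrank k V + 1),
        (-1 : k) ^ n * LinearMap.trace k (⋀[k]^n V) (exteriorPowerMap n α)) := by
  classical
  set d := Module.finrank k V with hd
  let b : Module.Basis (Fin d) k V := Module.finBasis k V
  set A := LinearMap.toMatrix b b α with hA
  constructor
  · -- polynomial identity
    let bX : Module.Basis (Fin d) (Polynomial k) (TensorProduct k (Polynomial k) V) :=
      Algebra.TensorProduct.basis (Polynomial k) b
    rw [← LinearMap.det_toMatrix bX]
    have hmat : LinearMap.toMatrix bX bX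
        (LinearMap.id - (Polynomial.X : Polynomial k) • LinearMap.baseChange (Polynomial k) α)
        = 1 - (Polynomial.X : Polynomial k) • A.map (algebraMap k (Polynomial k)) := by
      rw [map_sub (LinearMap.toMatrix bX bX), map_smul, LinearMap.toMatrix_id,
        LinearMap.toMatrix_baseChange]
    rw [hmat, det_one_sub_smul]
    refine Finset.sum_congr rfl fun n _ => ?_
    have hsub : ∀ s : {s : Finset (Fin d) // s.card = n},
        ((A.map (algebraMap k (Polynomial k))).submatrix (inc s) (inc s)).det
          = Polynomial.C ((A.submatrix (inc s) (inc s)).det) := by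
      intro s
      rw [Matrix.submatrix_map, ← RingHom.mapMatrix_apply, ← RingHom.map_det, Polynomial.algebraMap_eq]
    simp_rw [hsub, ← map_sum]
    rw [← trace_exteriorPowerMap b n α]
    ring
  · rw [← LinearMap.det_toMatrix b]
    have hmat : LinearMap.toMatrix b b (LinearMap.id - α) = 1 - (1 : k) • A := by
      rw [map_sub (LinearMap.toMatrix b b), LinearMap.toMatrix_id, one_smul]
    rw [hmat, det_one_sub_smul]
    refine Finset.sum_congr rfl fun n _ => ?_
    rw [← trace_exteriorPowerMap b n α]
    ring
end
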